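/- arXiv:1902.05405 — 2 statements merged into one kernel-verified Lean document; each statement's English description precedes it below -/
import Mathlib

section
/- Any integer matrix V of size 2g×2g with V - Vᵀ equal to the standard symplectic form J is congruent, via a matrix P ∈ GL(2g,ℤ) preserving J (i.e., P J Pᵀ = J), to a matrix W (W = P V Pᵀ) such that every odd-indexed diagonal entry W(2i,2i) is odd. -/
open Matrix

/-- The standard symplectic form of size `2g`: block diagonal with `g` copies of
`[[0,1],[-1,0]]`. -/
def stdSymplectic (g : ℕ) : Matrix (Fin (2 * g)) (Fin (2 * g)) ℤ :=
  fun i j =>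
    if (i : ℕ) + 1 = (j : ℕ) ∧ Even (i : ℕ) then 1
    else if (j : ℕ) + 1 = (i : ℕ) ∧ Even (j : ℕ) then -1
    else 0

namespace StmtAux

def S : Matrix (Fin 2) (Fin 2) ℤ := !![0,1;-1,0]

def e (g : ℕ) : Fin 2 × Fin g ≃ Fin (2 * g) :=
  (Equiv.prodComm _ _).trans (finProdFinEquiv.trans (finCongr (mul_comm g 2)))

lemma e_symm (g : ℕ) (i : Fin (2*g)) : ((e g).symm i) =
    (⟨(i : ℕ) % 2, Nat.mod_lt _ (by omega)⟩, ⟨(i:ℕ)/2, by have := i.isLt; omega⟩) := by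
  simp [e, Fin.modNat, Fin.divNat]

lemma std_eq (g : ℕ) :
    stdSymplectic g = reindex (e g) (e g) (blockDiagonal fun _ : Fin g => S) := by
  ext i j
  rw [reindex_apply, submatrix_apply, e_symm, e_symm, blockDiagonal_apply]
  have hi := i.isLt; have hj := j.isLt
  by_cases h : (i:ℕ)/2 = (j:ℕ)/2
  · rw [if_pos (by exact Fin.ext h)]
    have h2 : (i:ℕ) % 2 = 0 ∨ (i:ℕ) % 2 = 1 := by omega
    have h3 : (j:ℕ) % 2 = 0 ∨ (j:ℕ) % 2 = 1 := by omega
    rcases h2 with h2 | h2 <;> rcases h3 with h3 | h3 <;>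
      · simp only [h2, h3, Fin.mk_zero, Fin.mk_one, S, Matrix.cons_val_zero,
          Matrix.cons_val_one, Matrix.head_cons, Matrix.head_fin_const,
          Matrix.cons_val', Matrix.empty_val', Matrix.of_apply]
        simp only [stdSymplectic, Nat.even_iff]
        split_ifs with h1 hh2 <;> omega
  · rw [if_neg (fun hc => h (congrArg Fin.val hc))]
    simp only [stdSymplectic, Nat.even_iff]
    split_ifs with h1 h2 <;> omega

variable {g : ℕ} (V : Matrix (Fin (2*g)) (Fin (2*g)) ℤ)

def idx (i : Fin g) (r : Fin 2) : Fin (2*g) :=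
  ⟨2*(i:ℕ)+(r:ℕ), by have := i.isLt; have := r.isLt; omega⟩

def blk (i : Fin g) : Matrix (Fin 2) (Fin 2) ℤ :=
  if Odd (V (idx i 0) (idx i 0)) then 1
  else if Odd (V (idx i 1) (idx i 1)) then S
  else !![1,1;0,1]

lemma blk_symp (i : Fin g) : blk V i * S * (blk V i)ᵀ = S := by
  unfold blk
  split_ifs <;> simp [S] <;> decide

lemma blk_det (i : Fin g) : (blk V i).det = 1 := by
  unfold blk
  split_ifs <;> simp [S, Matrix.det_fin_two_of]

def P : Matrix (Fin (2*g)) (Fin (2*g)) ℤ :=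
  reindex (e g) (e g) (blockDiagonal (blk V))

lemma P_det : (P V).det = 1 := by
  rw [P, det_reindex_self, det_blockDiagonal]
  simp [blk_det]

lemma P_symp : P V * stdSymplectic g * (P V)ᵀ = stdSymplectic g := by
  rw [std_eq, P, reindex_apply, reindex_apply, transpose_submatrix,
    submatrix_mul_equiv, submatrix_mul_equiv, blockDiagonal_transpose,
    ← blockDiagonal_mul, ← blockDiagonal_mul]
  simp only [blk_symp]

lemma P_apply (x y : Fin (2*g)) : P V x y =
    if ((x:ℕ)/2 : ℕ) = (y:ℕ)/2 then
      blk V ⟨(x:ℕ)/2, by have := x.isLt; omega⟩ ⟨(x:ℕ)%2, by omega⟩ ⟨(y:ℕ)%2, by omega⟩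
    else 0 := by
  rw [P, reindex_apply, submatrix_apply, e_symm, e_symm, blockDiagonal_apply]
  by_cases h : (x:ℕ)/2 = (y:ℕ)/2
  · rw [if_pos (Fin.ext h), if_pos h]
  · rw [if_neg (fun hc => h (congrArg Fin.val hc)), if_neg h]

lemma sum_two {N : ℕ} (f : Fin N → ℤ) (u v : Fin N) (huv : u ≠ v)
    (h : ∀ k, k ≠ u → k ≠ v → f k = 0) : (∑ k, f k) = f u + f v := by
  rw [← Finset.sum_pair huv]
  refine (Finset.sum_subset (Finset.subset_univ _) ?_).symm
  intro k _ hk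
  simp only [Finset.mem_insert, Finset.mem_singleton, not_or] at hk
  exact h k hk.1 hk.2

lemma main (hV : V - V.transpose = stdSymplectic g) (i : Fin g) :
    Odd ((P V * V * (P V)ᵀ) (idx i 0) (idx i 0)) := by
  set u : Fin (2*g) := idx i 0 with hu
  set v : Fin (2*g) := idx i 1 with hv
  have hui : (u : ℕ) = 2*(i:ℕ) := by simp [hu, idx]
  have hvi : (v : ℕ) = 2*(i:ℕ)+1 := by simp [hv, idx]
  set α : ℤ := blk V i 0 0 with hα
  set β : ℤ := blk V i 0 1 with hβ
  have hPu : P V u u = α := by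
    rw [P_apply, if_pos rfl]
    congr 1 <;> exact Fin.ext (by simp only [Fin.val_mk, hui, Fin.val_zero]; omega)
  have hPv : P V u v = β := by
    rw [P_apply, if_pos (by rw [hui, hvi]; omega)]
    congr 1 <;> exact Fin.ext (by simp only [Fin.val_mk, hui, hvi, Fin.val_zero, Fin.val_one]; omega)
  have hPz : ∀ k, k ≠ u → k ≠ v → P V u k = 0 := by
    intro k hk1 hk2
    rw [P_apply, if_neg]
    intro hc
    rw [hui] at hc
    rcases Nat.even_or_odd (k : ℕ) with he | he <;>
      [exact hk1 (Fin.ext (by rw [hui]; omega));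
       exact hk2 (Fin.ext (by rw [hvi]; rcases he with ⟨m, hm⟩; omega))]
  have huv : u ≠ v := fun h => by rw [Fin.ext_iff, hui, hvi] at h; omega
  have key : (P V * V * (P V)ᵀ) u u =
      (α * V u u + β * V v u) * α + (α * V u v + β * V v v) * β := by
    rw [mul_apply]
    simp only [transpose_apply]
    rw [sum_two (fun k => (P V * V) u k * P V u k) u v huv
      (fun k h1 h2 => by simp [hPz k h1 h2])]
    simp only [mul_apply]
    rw [sum_two (fun j => P V u j * V j u) u v huv
        (fun k h1 h2 => by simp [hPz k h1 h2]),
      sum_two (fun j => P V u j * V j v) u v huv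
        (fun k h1 h2 => by simp [hPz k h1 h2])]
    simp only [hPu, hPv]
  have hJ : V u v - V v u = 1 := by
    have := congrFun (congrFun hV u) v
    simp only [Matrix.sub_apply, transpose_apply, stdSymplectic] at this
    rw [this, if_pos ⟨by omega, by rw [hui]; exact even_two_mul _⟩]
  rw [key, hα, hβ]
  unfold blk
  split_ifs with h1 h2
  · simpa using h1
  · simp only [S, Matrix.cons_val_zero, Matrix.cons_val_one, Matrix.head_cons,
      Matrix.of_apply, Matrix.cons_val']
    simpa using h2
  · simp only [Matrix.cons_val_zero, Matrix.cons_val_one, Matrix.head_cons,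
      Matrix.of_apply, Matrix.cons_val']
    rw [Int.not_odd_iff_even] at h1 h2
    rw [Int.odd_iff]
    rw [Int.even_iff] at h1 h2
    rw [← hu] at h1
    rw [← hv] at h2
    omega

end StmtAux

/-- Any `2g×2g` integer matrix `V` with `V - Vᵀ = J` (the standard symplectic form)
is congruent by some `P ∈ GL(2g,ℤ)` with `P J Pᵀ = J` to `W = P V Pᵀ` whose
diagonal entries `W(2i,2i)` are all odd. -/
theorem stmt2 (g : ℕ) (V : Matrix (Fin (2 * g)) (Fin (2 * g)) ℤ)
    (hV : V - V.transpose = stdSymplectic g) :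
    ∃ P : Matrix (Fin (2 * g)) (Fin (2 * g)) ℤ, IsUnit P.det ∧
      P * stdSymplectic g * P.transpose = stdSymplectic g ∧
      ∀ i : Fin g,
        Odd ((P * V * P.transpose)
          ⟨2 * (i : ℕ), by have := i.isLt; omega⟩
          ⟨2 * (i : ℕ), by have := i.isLt; omega⟩) := by
  refine ⟨StmtAux.P V, by rw [StmtAux.P_det]; exact isUnit_one, StmtAux.P_symp V, ?_⟩
  intro i
  have h := StmtAux.main V hV i
  have hidx : StmtAux.idx i 0 =
      (⟨2 * (i : ℕ), by have := i.isLt; omega⟩ : Fin (2 * g)) :=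
    Fin.ext (by simp [StmtAux.idx])
  rwa [hidx] at h
end

section
/- Let R = 𝔽₃[t, t⁻¹] be the ring of Laurent polynomials over the field with three elements, and let V = [[0,1],[2,0]] as a matrix over R. Then the R-module M = R² / (V - t·Vᵀ)R² is isomorphic to (R/(t+1))², and in particular M requires exactly 2 generators (its minimal number of generators as an R-module is 2). -/
open Matrix LaurentPolynomial

/-- `R = 𝔽₃[t,t⁻¹]`, the ring of Laurent polynomials over the field with 3 elements. -/
abbrev R3 : Type := LaurentPolynomial (ZMod 3)

/-- The Seifert matrix `V = [[0,1],[2,0]]`, viewed over `R3`. -/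
noncomputable def seifertV : Matrix (Fin 2) (Fin 2) R3 := !![0, 1; 2, 0]

/-- The presented module `M = R² / (V - t·Vᵀ) R²`, the cokernel of `V - t·Vᵀ`. -/
noncomputable abbrev presM : Type :=
  (Fin 2 → R3) ⧸ LinearMap.range (Matrix.toLin' (seifertV - (T 1 : R3) • seifertV.transpose))

lemma h3 : (3:R3) = 0 := by
  have h := map_natCast (LaurentPolynomial.C : ZMod 3 →+* R3) 3
  have h2 : ((3:ℕ):ZMod 3) = 0 := by decide
  rw [h2, map_zero] at h
  exact_mod_cast h.symm

lemma hA : seifertV - (T 1 : R3) • seifertV.transpose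
    = !![0, T 1 + 1; -(T 1 + 1), 0] := by
  apply Matrix.ext
  intro i j
  fin_cases i <;> fin_cases j <;>
    simp only [seifertV, Matrix.sub_apply, Matrix.smul_apply, Matrix.transpose_apply,
      smul_eq_mul, Fin.mk_zero, Fin.mk_one, Matrix.of_apply, Matrix.cons_val', Matrix.cons_val_zero,
      Matrix.cons_val_one, Matrix.head_cons, Matrix.head_fin_const, Matrix.empty_val',
      Matrix.cons_val_fin_one]
  · ring
  · linear_combination (-(T 1)) * h3
  · linear_combination h3
  · ring

lemma hmv (v : Fin 2 → R3) :
    Matrix.toLin' (!![0, T 1 + 1; -(T 1 + 1), 0] : Matrix (Fin 2) (Fin 2) R3) v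
      = ![(T 1 + 1) * v 1, -((T 1 + 1) * v 0)] := by
  funext i
  fin_cases i <;>
    simp [Matrix.toLin'_apply, Matrix.mulVec, dotProduct, Fin.sum_univ_two] <;> ring

lemma key : LinearMap.range (Matrix.toLin' (seifertV - (T 1 : R3) • seifertV.transpose))
    = Submodule.pi Set.univ (fun _ : Fin 2 => (Ideal.span {(T 1 : R3) + 1} : Submodule R3 R3)) := by
  rw [hA]
  ext x
  simp only [LinearMap.mem_range, Submodule.mem_pi, Set.mem_univ, forall_true_left]
  constructor
  · rintro ⟨v, rfl⟩ i
    rw [hmv]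
    fin_cases i
    · exact Ideal.mem_span_singleton.mpr ⟨v 1, by simp⟩
    · exact Ideal.mem_span_singleton.mpr ⟨-(v 0), by simp⟩
  · intro h
    obtain ⟨a, ha⟩ := Ideal.mem_span_singleton.mp (h 0)
    obtain ⟨b, hb⟩ := Ideal.mem_span_singleton.mp (h 1)
    refine ⟨![-b, a], ?_⟩
    rw [hmv]
    funext i
    fin_cases i
    · simpa using ha.symm
    · simp [hb]

noncomputable def evR : R3 →ₐ[ZMod 3] ZMod 3 :=
  (AddMonoidAlgebra.lift (ZMod 3) (ZMod 3) ℤ)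
    ((Units.coeHom (ZMod 3)).comp (zpowersHom (ZMod 3)ˣ (-1)))

lemma evT : evR (T 1) = -1 := by
  rw [show (T 1 : R3) = AddMonoidAlgebra.single 1 1 from rfl]
  rw [evR, AddMonoidAlgebra.lift_single]
  simp

lemma one_notin : (1:R3) ∉ Ideal.span {(T 1 : R3) + 1} := by
  intro hmem
  obtain ⟨c, hc⟩ := Ideal.mem_span_singleton.mp hmem
  have := congrArg evR hc
  rw [_root_.map_one, _root_.map_mul, _root_.map_add, evT, _root_.map_one] at this
  simp at this

lemma I_ne_top : (Ideal.span {(T 1 : R3) + 1}) ≠ ⊤ := fun h => one_notin (h ▸ Submodule.mem_top)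

noncomputable def eIso : presM ≃ₗ[R3]
    ((R3 ⧸ Ideal.span {(T 1 : R3) + 1}) × (R3 ⧸ Ideal.span {(T 1 : R3) + 1})) :=
  (Submodule.quotEquivOfEq _ _ key).trans
    ((Submodule.quotientPi _).trans
      (LinearEquiv.piFinTwo R3 (fun _ => R3 ⧸ Ideal.span {(T 1 : R3) + 1})))

lemma smul_mk_eq (r x : R3) :
    r • (Ideal.Quotient.mk (Ideal.span {(T 1 : R3) + 1}) x)
      = Ideal.Quotient.mk (Ideal.span {(T 1 : R3) + 1}) (r * x) := rfl

lemma span_two : ∃ s : Finset presM, s.card = 2 ∧ Submodule.span R3 (s : Set presM) = ⊤ := by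
  classical
  set N := LinearMap.range (Matrix.toLin' (seifertV - (T 1 : R3) • seifertV.transpose)) with hN
  let m0 : presM := Submodule.Quotient.mk (Pi.single 0 1)
  let m1 : presM := Submodule.Quotient.mk (Pi.single 1 1)
  have hne : m0 ≠ m1 := by
    intro hEq
    rw [Submodule.Quotient.eq, key] at hEq
    have h0 := Submodule.mem_pi.mp hEq 0 (Set.mem_univ 0)
    simp only [Pi.sub_apply, Pi.single_eq_same, Pi.single_eq_of_ne (by decide : (0:Fin 2) ≠ 1),
      sub_zero] at h0
    exact one_notin h0
  refine ⟨{m0, m1}, ?_, ?_⟩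
  · rw [Finset.card_insert_of_notMem (by simpa using hne), Finset.card_singleton]
  · rw [eq_top_iff]
    rintro m -
    obtain ⟨x, rfl⟩ := Submodule.Quotient.mk_surjective N m
    have hx : x = x 0 • (Pi.single 0 1 : Fin 2 → R3) + x 1 • (Pi.single 1 1 : Fin 2 → R3) := by
      funext i
      fin_cases i <;>
        simp [Pi.single_apply, Pi.smul_apply, smul_eq_mul]
    rw [hx, Submodule.Quotient.mk_add, Submodule.Quotient.mk_smul, Submodule.Quotient.mk_smul]
    refine add_mem (Submodule.smul_mem _ _ ?_) (Submodule.smul_mem _ _ ?_) <;>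
      apply Submodule.subset_span <;> simp [m0, m1]

lemma lower (s : Finset presM) (hs : Submodule.span R3 (s : Set presM) = ⊤) : 2 ≤ s.card := by
  by_contra hlt
  push_neg at hlt
  obtain ⟨v, hv⟩ := Finset.card_le_one_iff_subset_singleton.mp (Nat.lt_succ_iff.mp hlt)
  have hle : (⊤ : Submodule R3 presM) ≤ Submodule.span R3 {v} := by
    rw [← hs]
    exact Submodule.span_mono (by exact_mod_cast hv)
  have hv' : ∀ m : presM, ∃ r : R3, r • v = m :=
    fun m => Submodule.mem_span_singleton.mp (hle Submodule.mem_top)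
  set I := Ideal.span {(T 1 : R3) + 1} with hI
  let w := eIso v
  have hw : ∀ q : (R3 ⧸ I) × (R3 ⧸ I), ∃ r : R3, r • w = q := by
    intro q
    obtain ⟨r, hr⟩ := hv' (eIso.symm q)
    exact ⟨r, by rw [show w = eIso v from rfl, ← _root_.map_smul, hr, LinearEquiv.apply_symm_apply]⟩
  obtain ⟨α, hα⟩ := Ideal.Quotient.mk_surjective w.1
  obtain ⟨β, hβ⟩ := Ideal.Quotient.mk_surjective w.2
  obtain ⟨r, hr⟩ := hw (1, 0)
  have hr1 : r • w.1 = 1 := congrArg Prod.fst hr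
  have hr2 : r • w.2 = 0 := congrArg Prod.snd hr
  rw [← hα, smul_mk_eq] at hr1
  rw [← hβ, smul_mk_eq] at hr2
  have hw2 : w.2 = 0 := by
    rw [← hβ]
    calc Ideal.Quotient.mk I β = Ideal.Quotient.mk I β * Ideal.Quotient.mk I (r * α) := by
            rw [hr1, mul_one]
      _ = Ideal.Quotient.mk I α * Ideal.Quotient.mk I (r * β) := by
            rw [← _root_.map_mul, ← _root_.map_mul]; ring_nf
      _ = 0 := by rw [hr2, mul_zero]
  obtain ⟨r', hr'⟩ := hw (0, 1)
  have : r' • w.2 = 1 := congrArg Prod.snd hr'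
  rw [hw2, smul_zero] at this
  have h1mem : (1 : R3) ∈ I :=
    Ideal.Quotient.eq_zero_iff_mem.mp (by rw [_root_.map_one]; exact this.symm)
  exact one_notin h1mem

/-- `M = R²/(V - t·Vᵀ)R² ≅ (R/(t+1))²` as `R`-modules, and the minimal number of
generators of `M` as an `R`-module is exactly 2. -/
theorem stmt3 :
    Nonempty (presM ≃ₗ[R3]
      ((R3 ⧸ Ideal.span {(T 1 : R3) + 1}) × (R3 ⧸ Ideal.span {(T 1 : R3) + 1}))) ∧
    (∃ s : Finset presM, s.card = 2 ∧ Submodule.span R3 (s : Set presM) = ⊤) ∧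
    (∀ s : Finset presM, Submodule.span R3 (s : Set presM) = ⊤ → 2 ≤ s.card) := by
  exact ⟨⟨eIso⟩, span_two, lower⟩
end
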